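/- Let c(V,W) := det(d_V^W) where d_V^W is the square matrix associated to representations V, W with ⟨dim V, dim W⟩ = 0. Given a short exact sequence 0 → V' → V → V'' → 0 of representations with ⟨dim V', dim W⟩ = 0 (hence also ⟨dim V'', dim W⟩ = 0), one has c(V,W) = c(V',W)·c(V'',W). -/

import Mathlib

open Matrix

lemma fromColumns_sub' {K : Type*} [Field K] {m n1 n2 : Type*}
    (A C : Matrix m n1 K) (B D : Matrix m n2 K) :
    fromCols A B - fromCols C D = fromCols (A - C) (B - D) := by
  ext i (j|j) <;> simp [fromCols]

/-- Coordinates, w.r.t. a block-adapted basis, of an element built from two halves. -/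
lemma repr_fromCols {K : Type*} [Field K] {A : Type*}
    {r s1 s2 : A → Type*}
    {ι' ι'' : Type*} [Fintype ι'] [DecidableEq ι'] [Fintype ι''] [DecidableEq ι'']
    (c' : Module.Basis ι' K (∀ a : A, Matrix (r a) (s1 a) K))
    (c'' : Module.Basis ι'' K (∀ a : A, Matrix (r a) (s2 a) K))
    (c : Module.Basis (ι' ⊕ ι'') K (∀ a : A, Matrix (r a) (s1 a ⊕ s2 a) K))
    (hc1 : ∀ i a, c (Sum.inl i) a = Matrix.fromCols (c' i a) 0)
    (hc2 : ∀ i a, c (Sum.inr i) a = Matrix.fromCols 0 (c'' i a))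
    (φ' : ∀ a : A, Matrix (r a) (s1 a) K) (φ'' : ∀ a : A, Matrix (r a) (s2 a) K) :
    ⇑(c.repr (fun a => fromCols (φ' a) (φ'' a))) =
      Sum.elim (⇑(c'.repr φ')) (⇑(c''.repr φ'')) := by
  have key : (fun a => fromCols (φ' a) (φ'' a)) =
      ∑ k : ι' ⊕ ι'', Sum.elim (⇑(c'.repr φ')) (⇑(c''.repr φ'')) k • c k := by
    rw [Fintype.sum_sum_type]
    have h1 : ∑ i : ι', Sum.elim (⇑(c'.repr φ')) (⇑(c''.repr φ'')) (Sum.inl i) • c (Sum.inl i)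
        = ∑ i : ι', (c'.repr φ') i • c (Sum.inl i) := by simp
    have h2 : ∑ i : ι'', Sum.elim (⇑(c'.repr φ')) (⇑(c''.repr φ'')) (Sum.inr i) • c (Sum.inr i)
        = ∑ i : ι'', (c''.repr φ'') i • c (Sum.inr i) := by simp
    rw [h1, h2]
    funext a
    ext i (j|j)
    · have := c'.sum_repr φ'
      have h3 : φ' a i j = (∑ k : ι', (c'.repr φ') k • c' k) a i j := by rw [this]
      simp only [Finset.sum_apply, Pi.smul_apply, Matrix.sum_apply, Matrix.smul_apply,
        smul_eq_mul] at h3 ⊢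
      simp only [Pi.add_apply, Matrix.add_apply, Finset.sum_apply, Pi.smul_apply,
        Matrix.sum_apply, Matrix.smul_apply, smul_eq_mul, hc1, hc2, fromCols_apply_inl,
        Matrix.zero_apply, mul_zero, Finset.sum_const_zero, add_zero]
      exact h3
    · have := c''.sum_repr φ''
      have h3 : φ'' a i j = (∑ k : ι'', (c''.repr φ'') k • c'' k) a i j := by rw [this]
      simp only [Finset.sum_apply, Pi.smul_apply, Matrix.sum_apply, Matrix.smul_apply,
        smul_eq_mul] at h3 ⊢
      simp only [Pi.add_apply, Matrix.add_apply, Finset.sum_apply, Pi.smul_apply,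
        Matrix.sum_apply, Matrix.smul_apply, smul_eq_mul, hc1, hc2, fromCols_apply_inr,
        Matrix.zero_apply, mul_zero, Finset.sum_const_zero, zero_add]
      exact h3
  rw [key, c.repr_sum_self]
/-- The map `d_V^W : ⊕_x Hom(V(x), W(x)) → ⊕_a Hom(V(ta), W(ha))`,
`(φ(x))_x ↦ (W(a) φ(ta) - φ(ha) V(a))_a`, for matrix representations over arbitrary
(finite) index families `σ` (for `V`) and `ρ` (for `W`). -/
noncomputable def dmap {K : Type*} [Field K] {n : ℕ} {A : Type*}
    (ta ha : A → Fin n) (ρ σ : Fin n → Type*)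
    [∀ x, Fintype (ρ x)] [∀ x, Fintype (σ x)]
    (V : ∀ a : A, Matrix (σ (ha a)) (σ (ta a)) K)
    (W : ∀ a : A, Matrix (ρ (ha a)) (ρ (ta a)) K) :
    (∀ x : Fin n, Matrix (ρ x) (σ x) K) →ₗ[K]
      (∀ a : A, Matrix (ρ (ha a)) (σ (ta a)) K) where
  toFun φ := fun a => W a * φ (ta a) - φ (ha a) * V a
  map_add' φ ψ := by
    funext a
    simp [Matrix.mul_add, Matrix.add_mul]
    abel
  map_smul' c φ := by
    funext a
    simp [Matrix.mul_smul, Matrix.smul_mul, smul_sub]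

/-- Multiplicativity of the Schofield semi-invariant `c(V, W) = det d_V^W` on short
exact sequences: if `0 → V' → V → V'' → 0` is exact (encoded: `V` is block
upper-triangular with diagonal blocks `V'`, `V''`), `⟨dim V', dim W⟩ = 0` and
`⟨dim V'', dim W⟩ = 0`, then, computing the determinants with respect to compatible
(block-adapted) bases, `c(V, W) = c(V', W) · c(V'', W)`. -/
theorem schofield_multiplicative_ses {K : Type*} [Field K] {n : ℕ} {A : Type*}
    [Fintype A] (ta ha : A → Fin n) (α' α'' β : Fin n → ℕ)
    (V' : ∀ a : A, Matrix (Fin (α' (ha a))) (Fin (α' (ta a))) K)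
    (V'' : ∀ a : A, Matrix (Fin (α'' (ha a))) (Fin (α'' (ta a))) K)
    (B : ∀ a : A, Matrix (Fin (α' (ha a))) (Fin (α'' (ta a))) K)
    (W : ∀ a : A, Matrix (Fin (β (ha a))) (Fin (β (ta a))) K)
    (hEuler' : (∑ x : Fin n, (α' x : ℤ) * (β x : ℤ)) -
        (∑ a : A, (α' (ta a) : ℤ) * (β (ha a) : ℤ)) = 0)
    (hEuler'' : (∑ x : Fin n, (α'' x : ℤ) * (β x : ℤ)) -
        (∑ a : A, (α'' (ta a) : ℤ) * (β (ha a) : ℤ)) = 0)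
    {ι' ι'' : Type*} [Fintype ι'] [DecidableEq ι'] [Fintype ι''] [DecidableEq ι'']
    (b' : Module.Basis ι' K (∀ x : Fin n, Matrix (Fin (β x)) (Fin (α' x)) K))
    (c' : Module.Basis ι' K (∀ a : A, Matrix (Fin (β (ha a))) (Fin (α' (ta a))) K))
    (b'' : Module.Basis ι'' K (∀ x : Fin n, Matrix (Fin (β x)) (Fin (α'' x)) K))
    (c'' : Module.Basis ι'' K (∀ a : A, Matrix (Fin (β (ha a))) (Fin (α'' (ta a))) K))
    (b : Module.Basis (ι' ⊕ ι'') K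
      (∀ x : Fin n, Matrix (Fin (β x)) (Fin (α' x) ⊕ Fin (α'' x)) K))
    (c : Module.Basis (ι' ⊕ ι'') K
      (∀ a : A, Matrix (Fin (β (ha a))) (Fin (α' (ta a)) ⊕ Fin (α'' (ta a))) K))
    (hb1 : ∀ i x, b (Sum.inl i) x = Matrix.fromCols (b' i x) 0)
    (hb2 : ∀ i x, b (Sum.inr i) x = Matrix.fromCols 0 (b'' i x))
    (hc1 : ∀ i a, c (Sum.inl i) a = Matrix.fromCols (c' i a) 0)
    (hc2 : ∀ i a, c (Sum.inr i) a = Matrix.fromCols 0 (c'' i a)) :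
    (LinearMap.toMatrix b c
        (dmap ta ha (fun x => Fin (β x)) (fun x => Fin (α' x) ⊕ Fin (α'' x))
          (fun a => Matrix.fromBlocks (V' a) (B a) 0 (V'' a)) W)).det =
      (LinearMap.toMatrix b' c'
          (dmap ta ha (fun x => Fin (β x)) (fun x => Fin (α' x)) V' W)).det *
        (LinearMap.toMatrix b'' c''
          (dmap ta ha (fun x => Fin (β x)) (fun x => Fin (α'' x)) V'' W)).det := by
  set D' := dmap ta ha (fun x => Fin (β x)) (fun x => Fin (α' x)) V' W with hD'
  set D'' := dmap ta ha (fun x => Fin (β x)) (fun x => Fin (α'' x)) V'' W with hD''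
  set D := dmap ta ha (fun x => Fin (β x)) (fun x => Fin (α' x) ⊕ Fin (α'' x))
      (fun a => Matrix.fromBlocks (V' a) (B a) 0 (V'' a)) W with hD
  have h1 : ∀ i, D (b (Sum.inl i)) =
      fun a => fromCols ((D' (b' i)) a) (-(b' i (ha a) * B a)) := by
    intro i
    funext a
    show W a * b (Sum.inl i) (ta a) - b (Sum.inl i) (ha a) * fromBlocks (V' a) (B a) 0 (V'' a) = _
    rw [hb1, hb1, mul_fromCols, fromCols_mul_fromBlocks, fromColumns_sub']
    simp
    rfl
  have h2 : ∀ i, D (b (Sum.inr i)) =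
      fun a => fromCols (0 : Matrix (Fin (β (ha a))) (Fin (α' (ta a))) K)
        ((D'' (b'' i)) a) := by
    intro i
    funext a
    show W a * b (Sum.inr i) (ta a) - b (Sum.inr i) (ha a) * fromBlocks (V' a) (B a) 0 (V'' a) = _
    rw [hb2, hb2, mul_fromCols, fromCols_mul_fromBlocks, fromColumns_sub']
    simp
    rfl
  have hM : LinearMap.toMatrix b c D =
      fromBlocks (LinearMap.toMatrix b' c' D') (0 : Matrix ι' ι'' K)
        (Matrix.of fun j i => c''.repr (fun a => -(b' i (ha a) * B a)) j)
        (LinearMap.toMatrix b'' c'' D'') := by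
    ext (j | j) (i | i)
    · rw [LinearMap.toMatrix_apply, h1, repr_fromCols c' c'' c hc1 hc2]
      simp only [Sum.elim_inl, Matrix.fromBlocks_apply₁₁, LinearMap.toMatrix_apply]
    · rw [LinearMap.toMatrix_apply, h2, repr_fromCols c' c'' c hc1 hc2]
      have hz : (fun a : A => (0 : Matrix (Fin (β (ha a))) (Fin (α' (ta a))) K)) = 0 := rfl
      simp only [Sum.elim_inl, hz, map_zero, Matrix.fromBlocks_apply₁₂, Matrix.zero_apply,
        Finsupp.coe_zero, Pi.zero_apply]
    · rw [LinearMap.toMatrix_apply, h1, repr_fromCols c' c'' c hc1 hc2]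
      simp only [Sum.elim_inr, Matrix.fromBlocks_apply₂₁, Matrix.of_apply]
    · rw [LinearMap.toMatrix_apply, h2, repr_fromCols c' c'' c hc1 hc2]
      simp only [Sum.elim_inr, Matrix.fromBlocks_apply₂₂, LinearMap.toMatrix_apply]
  rw [hM, Matrix.det_fromBlocks_zero₁₂]
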